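/- If the data embedding is equivariant, U(V_s[x]) = U_s U(x) U_s† for all s, the trainable unitaries W_i commute with each U_s, the initial state ψ₀ satisfies U_s ψ₀ = ψ₀, and the observable O satisfies U_s O U_s† = O, then the prediction y(x) = ⟨ψ(x)| O |ψ(x)⟩ with ψ(x) = W_L U(x) ⋯ W_1 U(x) W_0 ψ₀ is invariant: y(V_s[x]) = y(x) for all s ∈ S and all x. -/
import Mathlib


open Matrix

noncomputable section

/-- The circuit `W_L A W_{L-1} A ⋯ W_1 A W_0` of a re-uploading model, with trainable
blocks `W i` interleaved with the data-encoding unitary `A`. -/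
def circuit {n : ℕ} (W : ℕ → Matrix (Fin n) (Fin n) ℂ) (A : Matrix (Fin n) (Fin n) ℂ) :
    ℕ → Matrix (Fin n) (Fin n) ℂ
  | 0 => W 0
  | (k + 1) => W (k + 1) * A * circuit W A k

/-- If the data embedding is equivariant, the trainable unitaries commute with the
representation, the initial state is invariant and the observable is invariant, then the
prediction `y(x) = ⟨ψ(x)|O|ψ(x)⟩` of the re-uploading model is invariant:
`y(V_s[x]) = y(x)`. -/
theorem invariant_reuploading_model {n : ℕ} {S D : Type*} [Group S]
    (Urep : S →* Matrix.unitaryGroup (Fin n) ℂ)    -- unitary representation of `S`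
    (V : S → D → D)                                -- action of `S` on the data space
    (enc : D → Matrix (Fin n) (Fin n) ℂ)           -- data encoding
    (L : ℕ) (W : ℕ → Matrix (Fin n) (Fin n) ℂ)     -- trainable blocks `W_0, …, W_L`
    (ψ₀ : Fin n → ℂ) (O : Matrix (Fin n) (Fin n) ℂ)
    (hencU : ∀ x, enc x ∈ Matrix.unitaryGroup (Fin n) ℂ)
    (henc : ∀ (s : S) (x : D), enc (V s x) =
      (Urep s : Matrix (Fin n) (Fin n) ℂ) * enc x * star (Urep s : Matrix (Fin n) (Fin n) ℂ))
    (hWU : ∀ i ≤ L, W i ∈ Matrix.unitaryGroup (Fin n) ℂ)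
    (hW : ∀ i ≤ L, ∀ s : S, Commute (W i) (Urep s : Matrix (Fin n) (Fin n) ℂ))
    (hψ₀ : ∀ s : S, (Urep s : Matrix (Fin n) (Fin n) ℂ).mulVec ψ₀ = ψ₀)
    (hψ₀norm : star ψ₀ ⬝ᵥ ψ₀ = 1)
    (hO : O.IsHermitian)
    (hOinv : ∀ s : S, (Urep s : Matrix (Fin n) (Fin n) ℂ) * O *
      star (Urep s : Matrix (Fin n) (Fin n) ℂ) = O) :
    ∀ (s : S) (x : D),
      star ((circuit W (enc (V s x)) L).mulVec ψ₀) ⬝ᵥ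
          O.mulVec ((circuit W (enc (V s x)) L).mulVec ψ₀) =
        star ((circuit W (enc x) L).mulVec ψ₀) ⬝ᵥ
          O.mulVec ((circuit W (enc x) L).mulVec ψ₀) := by
  intro s x
  set U : Matrix (Fin n) (Fin n) ℂ := (Urep s : Matrix (Fin n) (Fin n) ℂ) with hU
  have hUmem : U ∈ Matrix.unitaryGroup (Fin n) ℂ := (Urep s).2
  have hsU : star U * U = 1 := hUmem.1
  have hUs : U * star U = 1 := hUmem.2
  have cancel : ∀ z : Matrix (Fin n) (Fin n) ℂ, star U * (U * z) = z := fun z => by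
    rw [← mul_assoc, hsU, one_mul]
  -- conjugation of the circuit
  have key : ∀ k ≤ L, circuit W (enc (V s x)) k = U * circuit W (enc x) k * star U := by
    intro k hk
    induction k with
    | zero =>
      have hc : W 0 * U = U * W 0 := hW 0 (Nat.zero_le _) s
      simp only [circuit]
      rw [← hc, mul_assoc, hUs, mul_one]
    | succ k ih =>
      have ih' := ih (le_trans (Nat.le_succ k) hk)
      have hc : W (k + 1) * U = U * W (k + 1) := hW (k + 1) hk s
      simp only [circuit]
      rw [ih', henc s x, ← hU]
      simp only [mul_assoc]
      rw [cancel, ← mul_assoc, ← mul_assoc, hc]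
      simp only [mul_assoc]
  have hstarψ : (star U).mulVec ψ₀ = ψ₀ := by
    conv_lhs => rw [← hψ₀ s, ← hU]
    rw [Matrix.mulVec_mulVec, hsU, Matrix.one_mulVec]
  set ψ : Fin n → ℂ := (circuit W (enc x) L).mulVec ψ₀ with hψ
  have hvec : (circuit W (enc (V s x)) L).mulVec ψ₀ = U.mulVec ψ := by
    rw [key L le_rfl, ← Matrix.mulVec_mulVec, ← Matrix.mulVec_mulVec, hstarψ]
  rw [hvec]
  have hO' : star U * O * U = O := by
    have h := hOinv s
    rw [← hU] at h
    conv_lhs => rw [← h]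
    simp only [mul_assoc]
    rw [cancel, hsU, mul_one]
  rw [Matrix.star_mulVec, Matrix.mulVec_mulVec, ← Matrix.dotProduct_mulVec,
      Matrix.mulVec_mulVec]
  congr 1
  rw [show Uᴴ = star U from rfl, ← mul_assoc, hO']
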